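/- For a finite word w in the two-letter alphabet {P, L}, define a nonincreasing sequence π(w) of positive integers recursively by π(empty word) = (1), π(P·w) = (e_0 + 1, e_1, …, e_d) and π(L·w) = (e_0, e_0, e_1, …, e_d), where π(w) = (e_0, …, e_d). Let Φ(e_0,…,e_d)(t) := Σ_{i=0}^d [C(t+i, i+1) − C(t+i−e_i, i+1)] ∈ ℚ[t]. Then the map w ↦ Φ(π(w)) is a bijection from the set of finite words in {P, L} onto the set of admissible Hilbert polynomials; in particular, the graph whose vertices are admissible Hilbert polynomials and whose edges join Φ(π(w)) to Φ(π(P·w)) and to Φ(π(L·w)) is an infinite binary tree rooted at the constant polynomial 1. -/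

import Mathlib

/-- The polynomial binomial coefficient `C(t+a, b) ∈ ℚ[t]`. -/
noncomputable def polyBinom (a b : ℤ) : Polynomial ℚ :=
  if 0 ≤ b then
    (Nat.factorial b.toNat : ℚ)⁻¹ •
      (descPochhammer ℚ b.toNat).comp (Polynomial.X + Polynomial.C (a : ℚ))
  else 0

/-- The Macaulay–Hartshorne expression `Σ_{i=0}^d [C(t+i, i+1) − C(t+i−e_i, i+1)]`. -/
noncomputable def mhSum (d : ℕ) (e : Fin (d + 1) → ℤ) : Polynomial ℚ :=
  ∑ i : Fin (d + 1),
    (polyBinom ((i : ℕ) : ℤ) (((i : ℕ) : ℤ) + 1) -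
      polyBinom (((i : ℕ) : ℤ) - e i) (((i : ℕ) : ℤ) + 1))

/-- `p ∈ ℚ[t]` is an admissible Hilbert polynomial if it has a Macaulay–Hartshorne
expression with integers `e_0 ≥ e_1 ≥ … ≥ e_d > 0`. -/
def IsAdmissible (p : Polynomial ℚ) : Prop :=
  ∃ d : ℕ, ∃ e : Fin (d + 1) → ℤ, Antitone e ∧ (∀ i, 0 < e i) ∧ p = mhSum d e

/-- The sequence `π(w)` attached to a word `w` in the alphabet `{P, L}` (with `P = true`
and `L = false`): `π(∅) = (1)`, `π(P·w) = (e_0+1, e_1, …, e_d)` and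
`π(L·w) = (e_0, e_0, e_1, …, e_d)` where `π(w) = (e_0, …, e_d)`. -/
def piWord : List Bool → List ℤ
  | [] => [1]
  | c :: w =>
    match piWord w with
    | [] => [1]
    | e :: rest => if c then (e + 1) :: rest else e :: e :: rest

/-- `Φ(e_0,…,e_d)(t) := Σ_{i=0}^d [C(t+i, i+1) − C(t+i−e_i, i+1)]` for a list. -/
noncomputable def phiList (l : List ℤ) : Polynomial ℚ :=
  ∑ i : Fin l.length,
    (polyBinom ((i : ℕ) : ℤ) (((i : ℕ) : ℤ) + 1) -
      polyBinom (((i : ℕ) : ℤ) - l.get i) (((i : ℕ) : ℤ) + 1))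

open Polynomial

lemma polyBinom_zero (a : ℤ) : polyBinom a 0 = 1 := by
  simp [polyBinom]

lemma polyBinom_one (a : ℤ) : polyBinom a 1 = X + C (a : ℚ) := by
  simp [polyBinom]

lemma polyBinom_delta (a : ℤ) (n : ℕ) :
    polyBinom a ((n : ℤ) + 1) - (polyBinom a ((n : ℤ) + 1)).comp (X - 1)
      = polyBinom (a - 1) (n : ℤ) := by
  have h1 : (0:ℤ) ≤ (n:ℤ)+1 := by positivity
  have h2 : (0:ℤ) ≤ (n:ℤ) := Int.natCast_nonneg n
  have ht : ((n:ℤ)+1).toNat = n+1 := by omega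
  have ht2 : ((n:ℤ)).toNat = n := by omega
  simp only [polyBinom, if_pos h1, if_pos h2, ht, ht2]
  rw [show ((a - 1 : ℤ) : ℚ) = (a:ℚ) - 1 by push_cast; ring]
  rw [smul_comp, ← smul_sub]
  have e1 : (X + C (a:ℚ)).comp (X - 1) = X + C ((a:ℚ)-1) := by
    simp [add_comp, map_sub]; ring
  have key : (descPochhammer ℚ (n+1)).comp (X + C (a:ℚ)) -
      ((descPochhammer ℚ (n+1)).comp (X + C (a:ℚ))).comp (X - 1)
      = (((n:ℚ)+1)) • ((descPochhammer ℚ n).comp (X + C ((a:ℚ)-1))) := by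
    rw [comp_assoc, e1]
    nth_rewrite 1 [descPochhammer_succ_left]
    nth_rewrite 1 [descPochhammer_succ_right]
    have e2 : ((X : ℚ[X]) - 1).comp (X + C (a:ℚ)) = X + C ((a:ℚ)-1) := by
      simp [sub_comp, map_sub]; ring
    rw [mul_comp, X_comp, comp_assoc, e2, mul_comp, sub_comp, X_comp, natCast_comp,
      smul_eq_C_mul]
    simp only [map_add, map_neg, map_one, map_sub, C_1, C_eq_natCast]
    push_cast
    ring
  rw [key, smul_smul]
  congr 1
  rw [Nat.factorial_succ]
  push_cast
  rw [mul_inv]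
  field_simp

lemma phiList_nil : phiList ([] : List ℤ) = 0 := by
  simp [phiList]

lemma phiList_delta (l : List ℤ) :
    phiList l - (phiList l).comp (X - 1) = phiList l.tail := by
  cases l with
  | nil => simp [phiList_nil]
  | cons a t =>
    show _ = phiList t
    unfold phiList
    rw [sum_comp, ← Finset.sum_sub_distrib]
    have hterm : ∀ i : Fin (a::t).length,
        (polyBinom ((i:ℕ):ℤ) (((i:ℕ):ℤ)+1) - polyBinom (((i:ℕ):ℤ) - (a::t).get i) (((i:ℕ):ℤ)+1)) -
        (polyBinom ((i:ℕ):ℤ) (((i:ℕ):ℤ)+1) - polyBinom (((i:ℕ):ℤ) - (a::t).get i) (((i:ℕ):ℤ)+1)).comp (X-1)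
        = polyBinom (((i:ℕ):ℤ) - 1) ((i:ℕ):ℤ) - polyBinom (((i:ℕ):ℤ) - (a::t).get i - 1) ((i:ℕ):ℤ) := by
      intro i
      rw [sub_comp, show ∀ A B A' B' : ℚ[X], (A - B) - (A' - B') = (A - A') - (B - B') from
        fun _ _ _ _ => by ring, polyBinom_delta, polyBinom_delta]
    rw [Finset.sum_congr rfl (fun i _ => hterm i)]
    have step : ∀ F : Fin (t.length+1) → ℚ[X],
        ∑ i : Fin (a::t).length, F i = F 0 + ∑ j : Fin t.length, F j.succ :=
      fun F => Fin.sum_univ_succ F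
    rw [step]
    simp only [Fin.val_zero, Nat.cast_zero, zero_sub, polyBinom_zero, sub_self, zero_add,
      Fin.val_succ, List.get_cons_succ]
    apply Finset.sum_congr rfl
    intro j _
    rw [show (a::t).get j.succ = t.get j from List.get_cons_succ]
    congr 1 <;> congr 1 <;> push_cast <;> ring

lemma phiList_singleton (a : ℤ) : phiList [a] = C (a : ℚ) := by
  unfold phiList
  have step : ∀ F : Fin 1 → ℚ[X], ∑ i : Fin ([a] : List ℤ).length, F i = F 0 :=
    fun F => Fin.sum_univ_one F
  rw [step]
  simp only [Fin.val_zero, Nat.cast_zero, zero_add, zero_sub, List.get]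
  simp only [polyBinom_one, Int.cast_neg, Int.cast_zero, map_neg, map_zero]
  ring

lemma phiList_cons_sub (a b : ℤ) (t : List ℤ) :
    phiList (a :: t) - phiList (b :: t) = C ((a : ℚ) - b) := by
  unfold phiList
  have step : ∀ (c : ℤ) (F : Fin (t.length+1) → ℚ[X]),
      ∑ i : Fin (c::t).length, F i = F 0 + ∑ j : Fin t.length, F j.succ :=
    fun _ F => Fin.sum_univ_succ F
  rw [step a, step b]
  simp only [Fin.val_zero, Nat.cast_zero, zero_add, zero_sub, Fin.val_succ,
    List.get_cons_succ, List.get]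
  simp only [List.get_eq_getElem, List.getElem_cons_zero, List.getElem_cons_succ, Fin.val_succ,
    Fin.val_zero]
  simp only [polyBinom_one, Int.cast_neg, Int.cast_zero, map_neg, map_zero, map_sub]
  ring

lemma phiList_delta_iter (k : ℕ) (l : List ℤ) :
    (fun p : ℚ[X] => p - p.comp (X - 1))^[k] (phiList l) = phiList (l.drop k) := by
  induction k generalizing l with
  | zero => simp
  | succ k ih =>
    rw [Function.iterate_succ_apply', ih]
    show phiList _ - _ = _
    rw [phiList_delta, List.tail_drop]

lemma phiList_ne_zero : ∀ l : List ℤ, (∀ x ∈ l, 0 < x) → l ≠ [] → phiList l ≠ 0 := by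
  intro l
  induction l with
  | nil => simp
  | cons a t ih =>
    intro hpos _
    cases t with
    | nil =>
      rw [phiList_singleton]
      have ha : (0:ℤ) < a := hpos a (by simp)
      simp only [ne_eq, C_eq_zero, Int.cast_eq_zero]
      omega
    | cons b t' =>
      intro h0
      have hd := phiList_delta (a :: b :: t')
      rw [h0] at hd
      simp only [zero_comp, sub_zero, zero_sub, neg_eq_zero] at hd
      exact ih (fun x hx => hpos x (List.mem_cons_of_mem a hx)) (by simp) hd.symm

lemma phiList_lt_false (l l' : List ℤ) (hl' : ∀ x ∈ l', 0 < x)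
    (h : phiList l = phiList l') (hlt : l.length < l'.length) : False := by
  have h1 := phiList_delta_iter l.length l
  have h2 := phiList_delta_iter l.length l'
  rw [List.drop_length, phiList_nil] at h1
  rw [← h, h1] at h2
  have hne : l'.drop l.length ≠ [] := by
    intro hnil
    have := congrArg List.length hnil
    simp [List.length_drop] at this
    omega
  exact phiList_ne_zero _ (fun x hx => hl' x (List.drop_subset _ _ hx)) hne h2.symm

lemma phiList_length_eq {l l' : List ℤ} (hl : ∀ x ∈ l, 0 < x) (hl' : ∀ x ∈ l', 0 < x)
    (h : phiList l = phiList l') : l.length = l'.length := by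
  rcases lt_trichotomy l.length l'.length with hlt | heq | hgt
  · exact absurd (phiList_lt_false l l' hl' h hlt) (by simp)
  · exact heq
  · exact absurd (phiList_lt_false l' l hl h.symm hgt) (by simp)

lemma phiList_inj : ∀ l l' : List ℤ, (∀ x ∈ l, 0 < x) → (∀ x ∈ l', 0 < x) →
    phiList l = phiList l' → l = l' := by
  intro l
  induction l with
  | nil =>
    intro l' _ hl' h
    have := phiList_length_eq (by simp) hl' h
    exact (List.length_eq_zero_iff.mp this.symm).symm
  | cons a t ih =>
    intro l' hl hl' h
    cases l' with
    | nil => have := phiList_length_eq hl hl' h; simp at this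
    | cons b t' =>
      have hd := phiList_delta (a :: t)
      rw [h, phiList_delta] at hd
      have ht : t = t' := ih t' (fun x hx => hl x (List.mem_cons_of_mem a hx))
        (fun x hx => hl' x (List.mem_cons_of_mem b hx)) hd.symm
      subst ht
      have hc : C ((a:ℚ) - b) = 0 := by
        rw [← phiList_cons_sub a b t, h, sub_self]
      have : (a:ℚ) - b = 0 := C_eq_zero.mp hc
      have : a = b := by exact_mod_cast sub_eq_zero.mp this
      rw [this]

lemma piWord_spec (w : List Bool) :
    piWord w ≠ [] ∧ (∀ x ∈ piWord w, 0 < x) ∧ (piWord w).Pairwise (· ≥ ·) := by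
  induction w with
  | nil => refine ⟨by simp [piWord], ?_, ?_⟩ <;> simp [piWord]
  | cons c w ih =>
    obtain ⟨hne, hpos, hpair⟩ := ih
    rcases hpw : piWord w with _ | ⟨e, rest⟩
    · exact absurd hpw hne
    rw [hpw] at hpos hpair
    rw [List.pairwise_cons] at hpair
    have he : 0 < e := hpos e (by simp)
    cases c
    · have hL : piWord (false :: w) = e :: e :: rest := by simp [piWord, hpw]
      rw [hL]
      refine ⟨by simp, ?_, ?_⟩
      · intro x hx
        rcases List.mem_cons.mp hx with rfl | hx
        · exact he
        · exact hpos x hx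
      · refine List.pairwise_cons.mpr ⟨?_, List.pairwise_cons.mpr hpair⟩
        intro x hx
        rcases List.mem_cons.mp hx with rfl | hx
        · exact le_refl x
        · exact hpair.1 x hx
    · have hP : piWord (true :: w) = (e + 1) :: rest := by simp [piWord, hpw]
      rw [hP]
      refine ⟨by simp, ?_, ?_⟩
      · intro x hx
        rcases List.mem_cons.mp hx with rfl | hx
        · omega
        · exact hpos x (List.mem_cons_of_mem e hx)
      · refine List.pairwise_cons.mpr ⟨?_, hpair.2⟩
        intro x hx
        have := hpair.1 x hx
        omega

lemma piWord_inj : ∀ w w' : List Bool, piWord w = piWord w' → w = w' := by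
  intro w
  induction w with
  | nil =>
    intro w' h
    cases w' with
    | nil => rfl
    | cons c' v' =>
      exfalso
      obtain ⟨hne, hpos, _⟩ := piWord_spec v'
      rcases hp : piWord v' with _ | ⟨e, r⟩
      · exact hne hp
      rw [hp] at hpos
      have he : 0 < e := hpos e (by simp)
      have h' : piWord (c'::v') = if c' then (e+1)::r else e::e::r := by simp [piWord, hp]
      rw [h', show piWord ([] : List Bool) = [1] from rfl] at h
      cases c' <;> simp_all
  | cons c v ih =>
    intro w' h
    obtain ⟨hne, hpos, hpair⟩ := piWord_spec v
    rcases hp : piWord v with _ | ⟨e, r⟩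
    · exact absurd hp hne
    rw [hp] at hpos hpair
    rw [List.pairwise_cons] at hpair
    have he : 0 < e := hpos e (by simp)
    have h1 : piWord (c::v) = if c then (e+1)::r else e::e::r := by simp [piWord, hp]
    cases w' with
    | nil =>
      exfalso
      rw [h1, show piWord ([] : List Bool) = [1] from rfl] at h
      cases c <;> simp_all
    | cons c' v' =>
      obtain ⟨hne', hpos', hpair'⟩ := piWord_spec v'
      rcases hp' : piWord v' with _ | ⟨e', r'⟩
      · exact absurd hp' hne'
      rw [hp'] at hpos' hpair'
      rw [List.pairwise_cons] at hpair'
      have he' : 0 < e' := hpos' e' (by simp)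
      have h1' : piWord (c'::v') = if c' then (e'+1)::r' else e'::e'::r' := by simp [piWord, hp']
      rw [h1, h1'] at h
      cases c <;> cases c' <;> simp only [reduceIte, Bool.false_eq_true, if_true, if_false, List.cons.injEq] at h
      · -- L L : e::e::r = e'::e'::r'
        obtain ⟨h2, _, h4⟩ := h
        subst h2
        have : v = v' := ih v' (by rw [hp, hp', h4])
        rw [this]
      · -- L P : e::e::r = (e'+1)::r'
        exfalso
        obtain ⟨h2, h3⟩ := h
        -- h3 : e::r = r' ; pairwise' : ∀ x ∈ r', e' ≥ x... e ∈ r' with e = e'+1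
        have hmem : e ∈ r' := by rw [← h3]; simp
        have := hpair'.1 e hmem
        omega
      · -- P L : (e+1)::r = e'::e'::r'
        exfalso
        obtain ⟨h2, h3⟩ := h
        have hmem : e' ∈ r := by rw [h3]; simp
        have := hpair.1 e' hmem
        omega
      · -- P P
        obtain ⟨h2, h3⟩ := h
        have he2 : e = e' := by omega
        subst he2
        have : v = v' := ih v' (by rw [hp, hp', h3])
        rw [this]

lemma exists_piWord : ∀ n : ℕ, ∀ l : List ℤ, l.sum.toNat ≤ n → l ≠ [] →
    (∀ x ∈ l, 0 < x) → l.Pairwise (· ≥ ·) → ∃ w, piWord w = l := by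
  intro n
  induction n with
  | zero =>
    intro l hs hne hpos _
    exfalso
    have := List.sum_pos l hpos hne
    omega
  | succ n ih =>
    intro l hs hne hpos hpair
    rcases l with _ | ⟨a, t⟩
    · exact absurd rfl hne
    have ha : 0 < a := hpos a (by simp)
    rcases t with _ | ⟨b, t'⟩
    · by_cases h1 : a = 1
      · exact ⟨[], by simp [piWord, h1]⟩
      · have h2 : 1 < a := by omega
        have hs' : ([a-1] : List ℤ).sum.toNat ≤ n := by
          simp only [List.sum_cons, List.sum_nil, add_zero] at hs ⊢
          omega
        obtain ⟨w, hw⟩ := ih [a-1] hs' (by simp) (by intro x hx; simp at hx; omega) (by simp)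
        refine ⟨true :: w, ?_⟩
        simp [piWord, hw]
    · rw [List.pairwise_cons] at hpair
      have hb : 0 < b := hpos b (by simp)
      have hab : b ≤ a := hpair.1 b (by simp)
      have htsum : (0:ℤ) < (b :: t').sum :=
        List.sum_pos _ (fun x hx => hpos x (List.mem_cons_of_mem a hx)) (by simp)
      have hsum_eq : (a :: b :: t').sum = a + (b :: t').sum := by simp
      by_cases hba : a = b
      · have hs' : (b :: t').sum.toNat ≤ n := by
          rw [hsum_eq] at hs
          omega
        obtain ⟨w, hw⟩ := ih (b :: t') hs' (by simp)
          (fun x hx => hpos x (List.mem_cons_of_mem a hx)) hpair.2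
        refine ⟨false :: w, ?_⟩
        simp [piWord, hw, hba]
      · have hab' : b < a := lt_of_le_of_ne hab (fun hh => hba hh.symm)
        have hpair2 := List.pairwise_cons.mp hpair.2
        have hs' : ((a-1) :: b :: t').sum.toNat ≤ n := by
          have : ((a-1) :: b :: t').sum = a - 1 + (b :: t').sum := by simp
          rw [hsum_eq] at hs
          omega
        obtain ⟨w, hw⟩ := ih ((a-1) :: b :: t') hs' (by simp)
          (by
            intro x hx
            rcases List.mem_cons.mp hx with rfl | hx
            · omega
            · exact hpos x (List.mem_cons_of_mem a hx))
          (by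
            refine List.pairwise_cons.mpr ⟨?_, hpair.2⟩
            intro x hx
            rcases List.mem_cons.mp hx with rfl | hx
            · omega
            · have := hpair2.1 x hx
              omega)
        refine ⟨true :: w, ?_⟩
        simp [piWord, hw]

lemma phiList_ofFn (d : ℕ) (e : Fin (d + 1) → ℤ) : phiList (List.ofFn e) = mhSum d e := by
  unfold phiList mhSum
  refine Eq.trans ?_ (Fin.sum_congr' _ (List.length_ofFn (f := e)))
  apply Finset.sum_congr rfl
  intro i _
  rw [List.get_ofFn]
  rfl

lemma isAdmissible_phiList (a : ℤ) (t : List ℤ) (hpos : ∀ x ∈ a::t, 0 < x)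
    (hpair : (a::t).Pairwise (· ≥ ·)) : IsAdmissible (phiList (a::t)) := by
  have hlen : t.length + 1 = (a::t).length := rfl
  refine ⟨t.length, fun i => (a::t).get (Fin.cast hlen i), ?_, ?_, ?_⟩
  · intro i j hij
    rcases eq_or_lt_of_le hij with rfl | hlt
    · exact le_refl _
    · refine List.pairwise_iff_get.mp hpair (Fin.cast hlen i) (Fin.cast hlen j) ?_
      rw [Fin.lt_def]
      exact Fin.lt_def.mp hlt
  · intro i
    exact hpos _ (List.get_mem _ _)
  · rw [← phiList_ofFn]
    congr 1
    apply List.ext_get (by simp)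
    intro i h1 h2
    rw [List.get_ofFn]
    rfl

/-- The map `w ↦ Φ(π(w))` is a bijection from the set of finite words in `{P, L}` onto
the set of admissible Hilbert polynomials, and the root (the image of the empty word)
is the constant polynomial `1`. -/
theorem statement_5 :
    (Function.Injective fun w : List Bool => phiList (piWord w)) ∧
    (Set.range (fun w : List Bool => phiList (piWord w)) = {p : Polynomial ℚ | IsAdmissible p}) ∧
    phiList (piWord []) = 1 := by
  refine ⟨?_, ?_, ?_⟩
  · intro w w' h
    obtain ⟨hne, hpos, _⟩ := piWord_spec w
    obtain ⟨hne', hpos', _⟩ := piWord_spec w'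
    exact piWord_inj w w' (phiList_inj _ _ hpos hpos' h)
  · ext p
    simp only [Set.mem_range, Set.mem_setOf_eq]
    constructor
    · rintro ⟨w, rfl⟩
      obtain ⟨hne, hpos, hpair⟩ := piWord_spec w
      rcases hp : piWord w with _ | ⟨a, t⟩
      · exact absurd hp hne
      rw [hp] at hpos hpair
      exact isAdmissible_phiList a t hpos hpair
    · rintro ⟨d, e, hmono, hpos, rfl⟩
      have hposl : ∀ x ∈ List.ofFn e, 0 < x := by
        intro x hx
        obtain ⟨i, rfl⟩ := List.mem_ofFn.mp hx
        exact hpos i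
      have hpairl : (List.ofFn e).Pairwise (· ≥ ·) := by
        refine List.pairwise_iff_get.mpr ?_
        intro i j hij
        rw [List.get_ofFn, List.get_ofFn]
        refine hmono (Fin.le_def.mpr ?_)
        simpa using le_of_lt (Fin.lt_def.mp hij)
      have hnel : List.ofFn e ≠ [] := by
        intro hnil
        have := congrArg List.length hnil
        simp at this
      obtain ⟨w, hw⟩ := exists_piWord (List.ofFn e).sum.toNat _ le_rfl hnel hposl hpairl
      exact ⟨w, by rw [hw, phiList_ofFn]⟩
  · rw [show piWord [] = [1] from rfl, phiList_singleton]
    simp
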